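/- Let A = E and B = F be m×n real matrices with column spaces 𝒞₁, 𝒞₂ and row spaces ℛ₁, ℛ₂. Then rank(E + F) = rank(E) + rank(F) if and only if 𝒞₁ ∩ 𝒞₂ = {0} and ℛ₁ ∩ ℛ₂ = {0}. -/

import Mathlib

open Matrix Submodule LinearMap Module

/-- If two submodules intersect trivially, the dimension of their sup is the sum. -/
private lemma finrank_sup_of_inf_eq_bot {K V : Type*} [Field K] [AddCommGroup V]
    [Module K V] [FiniteDimensional K V] {U W : Submodule K V} (h : U ⊓ W = ⊥) :
    finrank K ↥(U ⊔ W) = finrank K U + finrank K W := by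
  have h2 := Submodule.finrank_sup_add_finrank_inf_eq U W
  rw [h] at h2
  simpa using h2

/-- Half of the forward direction: the column spaces intersect trivially. -/
private lemma colInf_of_rank_add {m n : ℕ} (E F : Matrix (Fin m) (Fin n) ℝ)
    (h : (E + F).rank = E.rank + F.rank) :
    LinearMap.range E.mulVecLin ⊓ LinearMap.range F.mulVecLin = ⊥ := by
  have hle : LinearMap.range (E + F).mulVecLin ≤
      LinearMap.range E.mulVecLin ⊔ LinearMap.range F.mulVecLin := by
    rw [Matrix.mulVecLin_add]
    rintro _ ⟨x, rfl⟩
    exact Submodule.add_mem_sup (LinearMap.mem_range_self _ x) (LinearMap.mem_range_self _ x)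
  have h1 : (E + F).rank ≤
      finrank ℝ ↥(LinearMap.range E.mulVecLin ⊔ LinearMap.range F.mulVecLin) :=
    Submodule.finrank_mono hle
  have h2 := Submodule.finrank_sup_add_finrank_inf_eq
    (LinearMap.range E.mulVecLin) (LinearMap.range F.mulVecLin)
  have hE : E.rank = finrank ℝ (LinearMap.range E.mulVecLin) := rfl
  have hF : F.rank = finrank ℝ (LinearMap.range F.mulVecLin) := rfl
  have hz : finrank ℝ ↥(LinearMap.range E.mulVecLin ⊓ LinearMap.range F.mulVecLin) = 0 := by
    omega
  exact Submodule.finrank_eq_zero.mp hz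

/-- `rank(E + F) = rank E + rank F` iff the column spaces of `E` and `F`
intersect trivially and their row spaces intersect trivially. -/
theorem rank_add_eq_iff_trivial_intersections {m n : ℕ}
    (E F : Matrix (Fin m) (Fin n) ℝ) :
    (E + F).rank = E.rank + F.rank ↔
      (LinearMap.range E.mulVecLin ⊓ LinearMap.range F.mulVecLin = ⊥ ∧
       LinearMap.range Eᵀ.mulVecLin ⊓ LinearMap.range Fᵀ.mulVecLin = ⊥) := by
  constructor
  · intro h
    refine ⟨colInf_of_rank_add E F h, colInf_of_rank_add Eᵀ Fᵀ ?_⟩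
    calc (Eᵀ + Fᵀ).rank = (E + F)ᵀ.rank := by rw [Matrix.transpose_add]
      _ = (E + F).rank := Matrix.rank_transpose _
      _ = E.rank + F.rank := h
      _ = Eᵀ.rank + Fᵀ.rank := by rw [Matrix.rank_transpose, Matrix.rank_transpose]
  · rintro ⟨hc, hr⟩
    -- Block matrix M = [E; F]
    set M : Matrix (Fin m ⊕ Fin m) (Fin n) ℝ := Matrix.fromRows E F with hM
    have hker : LinearMap.ker M.mulVecLin = LinearMap.ker E.mulVecLin ⊓ LinearMap.ker F.mulVecLin := by
      ext x
      simp only [LinearMap.mem_ker, Submodule.mem_inf, Matrix.mulVecLin_apply, hM,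
        Matrix.fromRows_mulVec]
      constructor
      · intro hx
        constructor <;> ext i
        · exact congrFun hx (Sum.inl i)
        · exact congrFun hx (Sum.inr i)
      · rintro ⟨h1, h2⟩
        ext (i | i)
        · exact congrFun h1 i
        · exact congrFun h2 i
    have hrange : LinearMap.range Mᵀ.mulVecLin =
        LinearMap.range Eᵀ.mulVecLin ⊔ LinearMap.range Fᵀ.mulVecLin := by
      rw [hM, Matrix.transpose_fromRows]
      apply le_antisymm
      · rintro _ ⟨v, rfl⟩
        rw [Matrix.mulVecLin_apply, ← Sum.elim_comp_inl_inr v,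
          Matrix.fromCols_mulVec_sumElim]
        exact Submodule.add_mem_sup (LinearMap.mem_range_self _ _) (LinearMap.mem_range_self _ _)
      · apply sup_le
        · rintro _ ⟨v, rfl⟩
          exact ⟨Sum.elim v 0, by
            simp [Matrix.fromCols_mulVec_sumElim, Matrix.mulVec_transpose]⟩
        · rintro _ ⟨v, rfl⟩
          exact ⟨Sum.elim 0 v, by
            simp [Matrix.fromCols_mulVec_sumElim, Matrix.mulVec_transpose]⟩
    -- rank M = rank E + rank F via rows
    have hET : Eᵀ.rank = E.rank := Matrix.rank_transpose E
    have hFT : Fᵀ.rank = F.rank := Matrix.rank_transpose F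
    have hrankMT : Mᵀ.rank = E.rank + F.rank := by
      show finrank ℝ (LinearMap.range Mᵀ.mulVecLin) = _
      rw [hrange, finrank_sup_of_inf_eq_bot hr, ← hET, ← hFT]
      rfl
    have hrankM : M.rank = E.rank + F.rank := by
      rw [← Matrix.rank_transpose, hrankMT]
    -- rank-nullity counts
    have hrnM := LinearMap.finrank_range_add_finrank_ker M.mulVecLin
    have hrnE := LinearMap.finrank_range_add_finrank_ker E.mulVecLin
    have hrnF := LinearMap.finrank_range_add_finrank_ker F.mulVecLin
    rw [Module.finrank_fin_fun] at hrnM hrnE hrnF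
    have hMrank : finrank ℝ (LinearMap.range M.mulVecLin) = E.rank + F.rank := hrankM
    have hErank : finrank ℝ (LinearMap.range E.mulVecLin) = E.rank := rfl
    have hFrank : finrank ℝ (LinearMap.range F.mulVecLin) = F.rank := rfl
    have hsupker := Submodule.finrank_sup_add_finrank_inf_eq
      (LinearMap.ker E.mulVecLin) (LinearMap.ker F.mulVecLin)
    rw [← hker] at hsupker
    -- ker E ⊔ ker F = ⊤
    have hkerinf : finrank ℝ (LinearMap.ker M.mulVecLin) = n - (E.rank + F.rank) := by omega
    have hsup : finrank ℝ ↥(LinearMap.ker E.mulVecLin ⊔ LinearMap.ker F.mulVecLin) = n := by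
      have hle : E.rank + F.rank ≤ n := by
        have h1 := Submodule.finrank_le (LinearMap.range Mᵀ.mulVecLin)
        have h2 : finrank ℝ (LinearMap.range Mᵀ.mulVecLin) = E.rank + F.rank := hrankMT
        rw [h2, Module.finrank_fin_fun] at h1
        exact h1
      omega
    have hkertop : LinearMap.ker E.mulVecLin ⊔ LinearMap.ker F.mulVecLin = ⊤ :=
      Submodule.eq_top_of_finrank_eq (by rw [hsup, Module.finrank_fin_fun])
    -- range E ≤ range (E+F) and range F ≤ range (E+F)
    have key : ∀ x : Fin n → ℝ, ∃ u v : Fin n → ℝ, x = u + v ∧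
        E.mulVecLin u = 0 ∧ F.mulVecLin v = 0 := by
      intro x
      have hx : x ∈ LinearMap.ker E.mulVecLin ⊔ LinearMap.ker F.mulVecLin := by
        rw [hkertop]; trivial
      obtain ⟨u, hu, v, hv, rfl⟩ := Submodule.mem_sup.mp hx
      exact ⟨u, v, rfl, hu, hv⟩
    have hEF : (E + F).mulVecLin = E.mulVecLin + F.mulVecLin := Matrix.mulVecLin_add E F
    have hEle : LinearMap.range E.mulVecLin ≤ LinearMap.range (E + F).mulVecLin := by
      rintro _ ⟨x, rfl⟩
      obtain ⟨u, v, rfl, hu, hv⟩ := key x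
      exact ⟨v, by simp [hEF, LinearMap.add_apply, hu, hv, map_add]⟩
    have hFle : LinearMap.range F.mulVecLin ≤ LinearMap.range (E + F).mulVecLin := by
      rintro _ ⟨x, rfl⟩
      obtain ⟨u, v, rfl, hu, hv⟩ := key x
      exact ⟨u, by simp [hEF, LinearMap.add_apply, hu, hv, map_add]⟩
    have hrangeEF : LinearMap.range (E + F).mulVecLin =
        LinearMap.range E.mulVecLin ⊔ LinearMap.range F.mulVecLin := by
      apply le_antisymm
      · rw [hEF]
        rintro _ ⟨x, rfl⟩
        exact Submodule.add_mem_sup (LinearMap.mem_range_self _ x) (LinearMap.mem_range_self _ x)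
      · exact sup_le hEle hFle
    show finrank ℝ (LinearMap.range (E + F).mulVecLin) = _
    rw [hrangeEF, finrank_sup_of_inf_eq_bot hc]
    rfl
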